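/- For every natural number n, the number of monotone Boolean functions of n+1 variables equals the number of ordered pairs (x, y) of monotone Boolean functions of n variables with x ≤ y; equivalently, d_{n+1} = Σ_{x ∈ D_n} |{y ∈ D_n : x ≤ y}|. -/

import Mathlib

/-- `D_n`, the poset of monotone Boolean functions of `n` variables. -/
abbrev DedekindPoset (n : ℕ) : Type := (Fin n → Bool) →o Bool

noncomputable instance (n : ℕ) : Fintype (DedekindPoset n) :=
  Fintype.ofInjective (fun f => (f : (Fin n → Bool) → Bool)) DFunLike.coe_injective

lemma cons_mono {n : ℕ} (b : Bool) {v w : Fin n → Bool} (h : v ≤ w) :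
    (Fin.cons b v : Fin (n + 1) → Bool) ≤ Fin.cons b w := by
  intro i
  refine Fin.cases ?_ ?_ i
  · simp
  · intro j; simpa using h j

/-- restriction with first coordinate `b` -/
def restrict {n : ℕ} (f : DedekindPoset (n + 1)) (b : Bool) : DedekindPoset n :=
  ⟨fun v => f (Fin.cons b v), fun _ _ h => f.mono (cons_mono b h)⟩

lemma restrict_le {n : ℕ} (f : DedekindPoset (n + 1)) :
    restrict f false ≤ restrict f true := by
  intro v
  apply f.mono
  intro i
  refine Fin.cases ?_ ?_ i
  · simp
  · intro j; simp

/-- combine a pair into a function of `n+1` variables -/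
def combine {n : ℕ} (x y : DedekindPoset n) (hxy : x ≤ y) : DedekindPoset (n + 1) :=
  ⟨fun w => bif w 0 then y (Fin.tail w) else x (Fin.tail w), by
    intro w w' h
    have htail : Fin.tail w ≤ Fin.tail w' := fun j => h j.succ
    have h0 := h 0
    cases hw : w 0 <;> cases hw' : w' 0 <;>
        simp only [hw, hw', cond_true, cond_false]
    · exact x.mono htail
    · exact (x.mono htail).trans (hxy _)
    · rw [hw, hw'] at h0; exact absurd h0 (by simp)
    · exact y.mono htail⟩

lemma restrict_combine {n : ℕ} (x y : DedekindPoset n) (hxy : x ≤ y) (b : Bool) :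
    restrict (combine x y hxy) b = bif b then y else x := by
  cases b <;> · ext v; simp [restrict, combine, Fin.tail_cons]; rfl

theorem dedekind_succ_eq_sum_upsets (n : ℕ) :
    Nat.card (DedekindPoset (n + 1)) =
      ∑ x : DedekindPoset n, Nat.card {y : DedekindPoset n // x ≤ y} := by
  classical
  have e : DedekindPoset (n + 1) ≃
      Σ x : DedekindPoset n, {y : DedekindPoset n // x ≤ y} :=
    { toFun := fun f => ⟨restrict f false, restrict f true, restrict_le f⟩
      invFun := fun p => combine p.1 p.2.1 p.2.2
      left_inv := by
        intro f
        ext w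
        simp only [combine, restrict, OrderHom.coe_mk]
        cases hw : w 0 <;>
          · simp only [hw, cond_true, cond_false]
            conv_rhs => rw [← Fin.cons_self_tail w, hw]
            rfl
      right_inv := by
        rintro ⟨x, y, hxy⟩
        have h1 := restrict_combine x y hxy false
        have h2 := restrict_combine x y hxy true
        simp only [cond_false, cond_true] at h1 h2
        refine Sigma.ext h1 ?_
        rw [Subtype.heq_iff_coe_eq]
        · exact h2
        · intro z
          show restrict (combine x y hxy) false ≤ z ↔ x ≤ z
          rw [h1] }
  rw [Nat.card_congr e]
  rw [Nat.card_eq_fintype_card, Fintype.card_sigma]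
  exact Finset.sum_congr rfl fun x _ => by rw [Nat.card_eq_fintype_card]
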